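/- If f_W is irreducible over k', then F is reducible for W. -/

import Mathlib

open MvPolynomial

noncomputable section

def Vspace {σ K : Type*} [Field K] (G : Set (MvPolynomial σ K)) (i : ℕ) :
    Submodule K (MvPolynomial σ K) :=
  sInf {W : Submodule K (MvPolynomial σ K) |
    (∀ f ∈ W, MvPolynomial.totalDegree f ≤ i) ∧
    (∀ g ∈ G, MvPolynomial.totalDegree g ≤ i → g ∈ W) ∧
    ∀ g ∈ W, ∀ h : MvPolynomial σ K,
      MvPolynomial.totalDegree (h * g) ≤ i → h * g ∈ W}

def lastFallDegree {σ K : Type*} [Field K] (G : Set (MvPolynomial σ K)) : ℕ :=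
  sSup {d : ℕ | 0 < d ∧
    Vspace G d ⊓ MvPolynomial.restrictTotalDegree σ K (d - 1) ≠ Vspace G (d - 1)}

/-- `ℓ(h(x_i))` : the linear form `∑_j h_j x_{ij}` in `S = k[x_{ij}]`,
for a univariate polynomial `h` of degree `< n'`. -/
def ellAt {k : Type*} [Field k] (m n' : ℕ) (i : Fin m) (h : Polynomial k) :
    MvPolynomial (Fin m × Fin n') k :=
  ∑ j : Fin n', C (h.coeff (j : ℕ)) * X (i, j)

/-- `ℓ(f)` for `f = ∑_i f_i(x_i)` with `deg f_i < n'`. -/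
def ellSum {k : Type*} [Field k] (m n' : ℕ) (φ : Fin m → Polynomial k) :
    MvPolynomial (Fin m × Fin n') k :=
  ∑ i : Fin m, ellAt m n' i (φ i)

/-- `Q̄_r` : the set of relations `x_{ij}^q - x_{i,j+1}` (for `j < n'-1`) and
`x_{i,n'-1}^q - ℓ(g_W(x_i))`, restricted to indices `i ≥ r`. -/
def QbarFrom {k : Type*} [Field k] (m n' q r : ℕ) (gW : Polynomial k) :
    Set (MvPolynomial (Fin m × Fin n') k) :=
  {P | ∃ (i : Fin m) (j : Fin n') (hj : (j : ℕ) + 1 < n'), r ≤ (i : ℕ) ∧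
        P = X (i, j) ^ q - X (i, ⟨(j : ℕ) + 1, hj⟩)} ∪
  {P | ∃ (i : Fin m) (j : Fin n'), r ≤ (i : ℕ) ∧ (j : ℕ) + 1 = n' ∧
        P = X (i, j) ^ q - ellAt m n' i gW}

/-- `S_{1r}` : the space of `k`-linear forms in the variables `x_{ij}` with `i ≥ r`. -/
def S1r {k : Type*} [Field k] (m n' : ℕ) (r : ℕ) :
    Submodule k (MvPolynomial (Fin m × Fin n') k) :=
  Submodule.span k {P | ∃ p : Fin m × Fin n', r ≤ (p.1 : ℕ) ∧ P = X p}

/-- `L(h)` for `h = ∑_i h_i(x_i)` with `deg h_i < n` : the `k'`-linearized polynomial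
`∑_i ∑_j h_{ij} x_i^{q^j}`. -/
def Lmap {k : Type*} [Field k] (m n q : ℕ) (h : Fin m → Polynomial k) :
    MvPolynomial (Fin m) k :=
  ∑ i : Fin m, ∑ j : Fin n, C ((h i).coeff (j : ℕ)) * X i ^ q ^ (j : ℕ)

/-- `F` is reducible for `W` (where `W` corresponds to `f_W`): for each `i < m-1`,
either `V_{Ḡ,q} ∩ S_{1i} = V_{Ḡ,q} ∩ S_{1,i+1}`, or some `k'`-linearized `L(f_i)`,
`f_i = ∑_{j≥i} g_{ij}` with `deg g_{ij} < n'`, has `ℓ(f_i) ∈ V_{Ḡ,q} ∩ S_{1i}` and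
`gcd(g_{ii}, f_W) = 1`. -/
def ReducibleFor {k' k : Type*} [Field k'] [Field k] [Algebra k' k]
    (q m n' : ℕ) (fW : Polynomial k')
    (Gbar : Set (MvPolynomial (Fin m × Fin n') k)) : Prop :=
  ∀ i : Fin m, (i : ℕ) + 1 < m →
    (Vspace Gbar q ⊓ S1r m n' (i : ℕ) = Vspace Gbar q ⊓ S1r m n' ((i : ℕ) + 1)) ∨
    ∃ φ : Fin m → Polynomial k,
      (∀ j, (φ j).natDegree < n') ∧
      (∀ j : Fin m, (j : ℕ) < (i : ℕ) → φ j = 0) ∧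
      ellSum m n' φ ∈ Vspace Gbar q ⊓ S1r m n' (i : ℕ) ∧
      IsCoprime (φ i) (fW.map (algebraMap k' k))


namespace LF
variable {k : Type} [Field k] {m n' : ℕ}

/-- coefficient of a linear form at variable `p`. -/
def cOf (v : MvPolynomial (Fin m × Fin n') k) (p : Fin m × Fin n') : k :=
  MvPolynomial.coeff (Finsupp.single p 1) v

@[simp] lemma cOf_X (p' p : Fin m × Fin n') :
    cOf (X p' : MvPolynomial (Fin m × Fin n') k) p = if p' = p then 1 else 0 := by
  classical
  simp only [cOf, MvPolynomial.coeff_X']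
  congr 1
  simp [Finsupp.single_left_inj (one_ne_zero (α := ℕ))]

@[simp] lemma cOf_add (v w : MvPolynomial (Fin m × Fin n') k) (p) :
    cOf (v + w) p = cOf v p + cOf w p := by simp [cOf]

@[simp] lemma cOf_smul (c : k) (v : MvPolynomial (Fin m × Fin n') k) (p) :
    cOf (c • v) p = c * cOf v p := by simp [cOf]

@[simp] lemma cOf_zero (p) : cOf (0 : MvPolynomial (Fin m × Fin n') k) p = 0 := by simp [cOf]

lemma mem_S1r_elim {r : ℕ} {v : MvPolynomial (Fin m × Fin n') k} (hv : v ∈ S1r m n' r) :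
    (∀ p : Fin m × Fin n', (p.1 : ℕ) < r → cOf v p = 0) ∧
      v = ∑ p : Fin m × Fin n', cOf v p • X p := by
  classical
  refine Submodule.span_induction ?_ ?_ ?_ ?_ hv
  · rintro _ ⟨p₀, hp₀, rfl⟩
    constructor
    · intro p hp
      rw [cOf_X]
      rcases eq_or_ne p₀ p with rfl | hne
      · omega
      · simp [hne]
    · rw [Finset.sum_eq_single p₀]
      · simp
      · intro b _ hb; simp [Ne.symm hb]
      · simp
  · constructor <;> simp
  · rintro v w - - ⟨h1, h2⟩ ⟨h3, h4⟩
    refine ⟨fun p hp => by simp [h1 p hp, h3 p hp], ?_⟩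
    conv_lhs => rw [h2, h4]
    rw [← Finset.sum_add_distrib]
    refine Finset.sum_congr rfl fun p _ => ?_
    simp [add_smul]
  · rintro c v - ⟨h1, h2⟩
    refine ⟨fun p hp => by simp [h1 p hp], ?_⟩
    conv_lhs => rw [h2]
    rw [Finset.smul_sum]
    refine Finset.sum_congr rfl fun p _ => ?_
    simp [smul_smul]

lemma sum_mem_S1r {r : ℕ} (c : Fin m × Fin n' → k)
    (hc : ∀ p : Fin m × Fin n', (p.1 : ℕ) < r → c p = 0) :
    (∑ p : Fin m × Fin n', c p • (X p : MvPolynomial (Fin m × Fin n') k)) ∈ S1r m n' r := by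
  refine Submodule.sum_mem _ fun p _ => ?_
  rcases lt_or_ge (p.1 : ℕ) r with h | h
  · rw [hc p h, zero_smul]; exact Submodule.zero_mem _
  · exact Submodule.smul_mem _ _ (Submodule.subset_span ⟨p, h, rfl⟩)

lemma S1r_antitone {r : ℕ} : S1r (k := k) m n' (r + 1) ≤ S1r m n' r := by
  refine Submodule.span_mono ?_
  rintro _ ⟨p, hp, rfl⟩
  exact ⟨p, by omega, rfl⟩

lemma totalDegree_le_one_of_mem_S1r {r : ℕ} {v : MvPolynomial (Fin m × Fin n') k}
    (hv : v ∈ S1r m n' r) : v.totalDegree ≤ 1 := by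
  obtain ⟨-, h2⟩ := mem_S1r_elim hv
  rw [h2]
  refine (MvPolynomial.totalDegree_finset_sum _ _).trans ?_
  refine Finset.sup_le fun p _ => ?_
  rw [smul_eq_C_mul]
  refine (MvPolynomial.totalDegree_mul _ _).trans ?_
  simp [MvPolynomial.totalDegree_X]

lemma coeff_finSum (a : Fin n' → k) (j₀ : Fin n') :
    (∑ jj : Fin n', Polynomial.C (a jj) * Polynomial.X ^ (jj : ℕ)).coeff (j₀ : ℕ) = a j₀ := by
  rw [Polynomial.finset_sum_coeff]
  rw [Finset.sum_eq_single j₀]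
  · simp
  · intro b _ hb
    have : (b : ℕ) ≠ (j₀ : ℕ) := fun h => hb (Fin.ext h)
    simp [Polynomial.coeff_C_mul, Polynomial.coeff_X_pow, Ne.symm this]
  · simp

lemma natDegree_finSum_lt (hn' : 0 < n') (a : Fin n' → k) :
    (∑ jj : Fin n', Polynomial.C (a jj) * Polynomial.X ^ (jj : ℕ)).natDegree < n' := by
  have : (∑ jj : Fin n', Polynomial.C (a jj) * Polynomial.X ^ (jj : ℕ)).natDegree ≤ n' - 1 := by
    refine Polynomial.natDegree_sum_le_of_forall_le _ _ fun jj _ => ?_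
    refine (Polynomial.natDegree_C_mul_le _ _).trans ?_
    rw [Polynomial.natDegree_X_pow]
    omega
  omega

lemma finSum_eq_zero_iff (a : Fin n' → k) :
    (∑ jj : Fin n', Polynomial.C (a jj) * Polynomial.X ^ (jj : ℕ)) = 0 ↔ ∀ jj, a jj = 0 := by
  constructor
  · intro h jj
    have := coeff_finSum a jj
    rw [h] at this
    simpa using this.symm
  · intro h
    simp [h]

/-- `i`-th component polynomial of a linear form. -/
def compPoly (m n' : ℕ) (s : Fin m) (v : MvPolynomial (Fin m × Fin n') k) : Polynomial k :=
  ∑ jj : Fin n', Polynomial.C (cOf v (s, jj)) * Polynomial.X ^ (jj : ℕ)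

lemma compPoly_add (s : Fin m) (v w : MvPolynomial (Fin m × Fin n') k) :
    compPoly m n' s (v + w) = compPoly m n' s v + compPoly m n' s w := by
  simp [compPoly, cOf, Finset.sum_add_distrib, add_mul]

lemma compPoly_smul (s : Fin m) (c : k) (v : MvPolynomial (Fin m × Fin n') k) :
    compPoly m n' s (c • v) = c • compPoly m n' s v := by
  simp only [compPoly, cOf, MvPolynomial.coeff_smul, Finset.smul_sum, smul_eq_mul]
  refine Finset.sum_congr rfl fun jj _ => ?_
  rw [Polynomial.smul_eq_C_mul, map_mul, mul_assoc]

lemma compPoly_sum {ι : Type*} (s : Finset ι) (f : ι → MvPolynomial (Fin m × Fin n') k)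
    (r : Fin m) : compPoly m n' r (∑ i ∈ s, f i) = ∑ i ∈ s, compPoly m n' r (f i) := by
  classical
  induction s using Finset.induction with
  | empty => simp [compPoly, cOf]
  | insert _ _ h ih => rw [Finset.sum_insert h, compPoly_add, ih, Finset.sum_insert h]

lemma compPoly_X (s : Fin m) (p' : Fin m × Fin n') :
    compPoly m n' s (X p' : MvPolynomial (Fin m × Fin n') k) =
      if p'.1 = s then Polynomial.X ^ (p'.2 : ℕ) else 0 := by
  classical
  rcases p' with ⟨s', j'⟩
  simp only [compPoly, cOf_X]
  by_cases hs : s' = s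
  · subst hs
    simp only [if_pos rfl]
    rw [Finset.sum_eq_single j']
    · simp
    · intro b _ hb
      have : (s', j') ≠ (s', b) := by simpa [Prod.ext_iff] using fun h => hb h.symm
      simp [this]
    · simp
  · rw [if_neg hs]
    refine Finset.sum_eq_zero fun b _ => ?_
    have : (s', j') ≠ (s, b) := by simp [Prod.ext_iff, hs]
    simp [this]

lemma compPoly_C_mul_X (s : Fin m) (a : k) (p' : Fin m × Fin n') :
    compPoly m n' s ((C a * X p' : MvPolynomial (Fin m × Fin n') k)) =
      a • compPoly m n' s (X p') := by
  rw [← MvPolynomial.smul_eq_C_mul, compPoly_smul]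

lemma compPoly_ellAt (s s' : Fin m) (h : Polynomial k) (hh : h.natDegree < n') :
    compPoly m n' s (ellAt m n' s' h) = if s' = s then h else 0 := by
  rw [ellAt, compPoly_sum]
  by_cases hs : s' = s
  · subst hs
    rw [if_pos rfl]
    calc ∑ jj : Fin n', compPoly m n' s' (C (h.coeff (jj:ℕ)) * X (s', jj))
        = ∑ jj : Fin n', Polynomial.C (h.coeff (jj:ℕ)) * Polynomial.X ^ (jj:ℕ) := by
          refine Finset.sum_congr rfl fun jj _ => ?_
          rw [compPoly_C_mul_X, compPoly_X]
          simp [Polynomial.smul_eq_C_mul]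
      _ = h := by
          conv_rhs => rw [Polynomial.as_sum_range' h n' hh]
          rw [← Fin.sum_univ_eq_sum_range (fun i => (Polynomial.monomial i) (h.coeff i)) n']
          exact Finset.sum_congr rfl fun jj _ => Polynomial.C_mul_X_pow_eq_monomial
  · rw [if_neg hs]
    refine Finset.sum_eq_zero fun jj _ => ?_
    rw [compPoly_C_mul_X, compPoly_X]
    simp [hs]

lemma ellSum_compPoly {v : MvPolynomial (Fin m × Fin n') k}
    (hv : v = ∑ p : Fin m × Fin n', cOf v p • X p) :
    ellSum m n' (fun j => compPoly m n' j v) = v := by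
  conv_rhs => rw [hv]
  rw [ellSum]; conv_rhs => rw [Fintype.sum_prod_type]
  refine Finset.sum_congr rfl fun s _ => ?_
  rw [ellAt]
  refine Finset.sum_congr rfl fun jj _ => ?_
  rw [compPoly]
  have : (∑ jj' : Fin n', Polynomial.C (cOf v (s, jj')) * Polynomial.X ^ (jj' : ℕ)).coeff (jj:ℕ)
      = cOf v (s, jj) := by
    rw [Polynomial.finset_sum_coeff, Finset.sum_eq_single jj]
    · simp
    · intro b _ hb
      have : (b : ℕ) ≠ (jj : ℕ) := fun h => hb (Fin.ext h)
      simp [Polynomial.coeff_C_mul, Polynomial.coeff_X_pow, Ne.symm this]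
    · simp
  rw [this, MvPolynomial.smul_eq_C_mul]

section VspaceFacts
variable {q : ℕ} {G : Set (MvPolynomial (Fin m × Fin n') k)}

lemma mem_Vspace_of_mem {g : MvPolynomial (Fin m × Fin n') k} (hg : g ∈ G)
    (hdeg : g.totalDegree ≤ q) : g ∈ Vspace G q :=
  Submodule.mem_sInf.mpr fun _ hW => hW.2.1 g hg hdeg

lemma mul_mem_Vspace {v h : MvPolynomial (Fin m × Fin n') k} (hv : v ∈ Vspace G q)
    (hd : (h * v).totalDegree ≤ q) : h * v ∈ Vspace G q :=
  Submodule.mem_sInf.mpr fun W hW => hW.2.2 v (Submodule.mem_sInf.mp hv W hW) h hd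

lemma pow_mem_Vspace (hq2 : 2 ≤ q) {v : MvPolynomial (Fin m × Fin n') k}
    (hv : v ∈ Vspace G q) (hdeg1 : v.totalDegree ≤ 1) : v ^ q ∈ Vspace G q := by
  have hrw : v ^ (q - 1) * v = v ^ q := by
    have h1 : q - 1 + 1 = q := by omega
    rw [← pow_succ, h1]
  have hd : (v ^ (q - 1) * v).totalDegree ≤ q := by
    refine (MvPolynomial.totalDegree_mul _ _).trans ?_
    have := (MvPolynomial.totalDegree_pow v (q - 1)).trans
      (Nat.mul_le_mul_left (q - 1) hdeg1)
    omega
  have := mul_mem_Vspace hv hd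
  rwa [hrw] at this

end VspaceFacts

section Step
variable (q : ℕ) (gbar : Polynomial k)

/-- the image of `x_{ij}^q` under the quotient relations. -/
def nextTerm (p : Fin m × Fin n') : MvPolynomial (Fin m × Fin n') k :=
  if h : (p.2 : ℕ) + 1 < n' then X (p.1, ⟨(p.2 : ℕ) + 1, h⟩) else ellAt m n' p.1 gbar

def Qrel (p : Fin m × Fin n') : MvPolynomial (Fin m × Fin n') k :=
  X p ^ q - nextTerm gbar p

lemma Qrel_mem (p : Fin m × Fin n') : Qrel q gbar p ∈ QbarFrom m n' q 0 gbar := by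
  rw [Qrel, nextTerm]
  split_ifs with h
  · exact Or.inl ⟨p.1, p.2, h, Nat.zero_le _, rfl⟩
  · exact Or.inr ⟨p.1, p.2, Nat.zero_le _, by omega, rfl⟩

lemma totalDegree_ellAt_le (s : Fin m) (h : Polynomial k) :
    (ellAt m n' s h).totalDegree ≤ 1 := by
  refine (MvPolynomial.totalDegree_finset_sum _ _).trans ?_
  refine Finset.sup_le fun jj _ => ?_
  refine (MvPolynomial.totalDegree_mul _ _).trans ?_
  simp [MvPolynomial.totalDegree_X, MvPolynomial.totalDegree_C]

lemma totalDegree_nextTerm_le (p : Fin m × Fin n') :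
    (nextTerm gbar p : MvPolynomial (Fin m × Fin n') k).totalDegree ≤ 1 := by
  rw [nextTerm]
  split_ifs with h
  · simp [MvPolynomial.totalDegree_X]
  · exact totalDegree_ellAt_le _ _

lemma totalDegree_Qrel_le (hq2 : 2 ≤ q) (p : Fin m × Fin n') :
    (Qrel q gbar p : MvPolynomial (Fin m × Fin n') k).totalDegree ≤ q := by
  rw [Qrel]
  refine (MvPolynomial.totalDegree_sub _ _).trans ?_
  have h1 : (X p ^ q : MvPolynomial (Fin m × Fin n') k).totalDegree ≤ q := by
    refine (MvPolynomial.totalDegree_pow _ _).trans ?_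
    simp [MvPolynomial.totalDegree_X]
  have h2 := totalDegree_nextTerm_le (m := m) (n' := n') gbar p
  simp only [sup_le_iff]
  omega

lemma ellAt_mem_S1r {r : ℕ} (s : Fin m) (h : Polynomial k) (hs : r ≤ (s : ℕ)) :
    ellAt m n' s h ∈ S1r m n' r := by
  refine Submodule.sum_mem _ fun jj _ => ?_
  rw [← MvPolynomial.smul_eq_C_mul]
  exact Submodule.smul_mem _ _ (Submodule.subset_span ⟨(s, jj), hs, rfl⟩)

lemma nextTerm_mem_S1r {r : ℕ} (p : Fin m × Fin n') (hp : r ≤ (p.1 : ℕ)) :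
    nextTerm gbar p ∈ S1r m n' r := by
  rw [nextTerm]
  split_ifs with h
  · exact Submodule.subset_span ⟨(p.1, ⟨(p.2 : ℕ) + 1, h⟩), hp, rfl⟩
  · exact ellAt_mem_S1r _ _ hp

lemma compPoly_nextTerm (hgdeg : gbar.natDegree < n') (s : Fin m) (p : Fin m × Fin n') :
    compPoly m n' s (nextTerm gbar p) =
      if p.1 = s then
        (if h : (p.2 : ℕ) + 1 < n' then Polynomial.X ^ ((p.2 : ℕ) + 1) else gbar)
      else 0 := by
  rw [nextTerm]
  by_cases h : (p.2 : ℕ) + 1 < n'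
  · rw [dif_pos h, compPoly_X]
    by_cases h1 : p.1 = s
    · simp [h1, dif_pos h]
    · simp [h1]
  · rw [dif_neg h, compPoly_ellAt _ _ _ hgdeg]
    by_cases h1 : p.1 = s
    · simp [h1, dif_neg h]
    · simp [h1]

/-- The Frobenius descent step. -/
lemma step (hq2 : 2 ≤ q) (hgdeg : gbar.natDegree < n')
    {G : Set (MvPolynomial (Fin m × Fin n') k)} (hQ : QbarFrom m n' q 0 gbar ⊆ G)
    (frM : MvPolynomial (Fin m × Fin n') k →+* MvPolynomial (Fin m × Fin n') k)
    (hfrM : ∀ x, frM x = x ^ q)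
    (fr : k →+* k) (hfr : ∀ a : k, fr a = a ^ q)
    (fbar : Polynomial k) (hfb : fbar = Polynomial.X ^ n' - gbar)
    {r : ℕ} {v : MvPolynomial (Fin m × Fin n') k}
    (hv : v ∈ Vspace G q ⊓ S1r m n' r) :
    ∃ w ∈ Vspace G q ⊓ S1r m n' r, ∀ s : Fin m,
      (AdjoinRoot.mk fbar) (compPoly m n' s w) =
        (AdjoinRoot.mk fbar) (Polynomial.X * (compPoly m n' s v).map fr) := by
  classical
  obtain ⟨hvV, hvS⟩ := hv
  obtain ⟨hzero, hrep⟩ := mem_S1r_elim hvS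
  set c : Fin m × Fin n' → k := cOf v with hc
  set w : MvPolynomial (Fin m × Fin n') k := ∑ p : Fin m × Fin n', (c p) ^ q • nextTerm gbar p
    with hw
  have claimA : v ^ q = ∑ p : Fin m × Fin n', (c p) ^ q • (X p ^ q) := by
    rw [← hfrM]
    conv_lhs => rw [hrep]
    rw [map_sum]
    refine Finset.sum_congr rfl fun p _ => ?_
    rw [hfrM, smul_pow]
  have claimB : w = v ^ q - ∑ p : Fin m × Fin n', (c p) ^ q • Qrel q gbar p := by
    rw [claimA, ← Finset.sum_sub_distrib, hw]
    refine Finset.sum_congr rfl fun p _ => ?_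
    rw [Qrel, smul_sub]
    ring
  have hwV : w ∈ Vspace G q := by
    rw [claimB]
    refine Submodule.sub_mem _ ?_ ?_
    · exact pow_mem_Vspace hq2 hvV (totalDegree_le_one_of_mem_S1r hvS)
    · refine Submodule.sum_mem _ fun p _ => Submodule.smul_mem _ _ ?_
      exact mem_Vspace_of_mem (hQ (Qrel_mem q gbar p)) (totalDegree_Qrel_le q gbar hq2 p)
  have hwS : w ∈ S1r m n' r := by
    rw [hw]
    refine Submodule.sum_mem _ fun p _ => ?_
    rcases lt_or_ge (p.1 : ℕ) r with h | h
    · rw [hzero p h, zero_pow (by omega : q ≠ 0), zero_smul]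
      exact Submodule.zero_mem _
    · exact Submodule.smul_mem _ _ (nextTerm_mem_S1r gbar p h)
  refine ⟨w, ⟨hwV, hwS⟩, fun s => ?_⟩
  have hcompw : compPoly m n' s w =
      ∑ j : Fin n', (c (s, j)) ^ q •
        (if h : (j : ℕ) + 1 < n' then Polynomial.X ^ ((j : ℕ) + 1) else gbar) := by
    rw [hw, compPoly_sum]
    have key : ∀ p : Fin m × Fin n',
        compPoly m n' s ((c p) ^ q • nextTerm gbar p) =
        if p.1 = s then (c p) ^ q •
          (if h : (p.2 : ℕ) + 1 < n' then Polynomial.X ^ ((p.2 : ℕ) + 1) else gbar)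
        else 0 := by
      intro p
      rw [compPoly_smul, compPoly_nextTerm gbar hgdeg]
      by_cases h : p.1 = s
      · rw [if_pos h, if_pos h]
      · rw [if_neg h, if_neg h, smul_zero]
    rw [Finset.sum_congr rfl fun p _ => key p]
    rw [Fintype.sum_prod_type]
    rw [Finset.sum_eq_single s]
    · simp
    · intro b _ hb
      refine Finset.sum_eq_zero fun j _ => ?_
      simp [hb]
    · simp
  have hrhs : Polynomial.X * (compPoly m n' s v).map fr =
      ∑ j : Fin n', Polynomial.C ((c (s, j)) ^ q) * Polynomial.X ^ ((j : ℕ) + 1) := by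
    rw [compPoly, Polynomial.map_sum, Finset.mul_sum]
    refine Finset.sum_congr rfl fun j _ => ?_
    rw [Polynomial.map_mul, Polynomial.map_C, Polynomial.map_pow, Polynomial.map_X, hfr]
    ring
  rw [hcompw, hrhs, map_sum, map_sum]
  refine Finset.sum_congr rfl fun j _ => ?_
  split_ifs with h
  · rw [Polynomial.smul_eq_C_mul]
  · have hj : (j : ℕ) + 1 = n' := by omega
    rw [hj]
    have hmk : AdjoinRoot.mk fbar gbar = AdjoinRoot.mk fbar (Polynomial.X ^ n') := by
      have heq : (Polynomial.X ^ n' : Polynomial k) - gbar = fbar := hfb.symm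
      have h0 : AdjoinRoot.mk fbar ((Polynomial.X ^ n' : Polynomial k) - gbar) = 0 := by
        rw [heq, AdjoinRoot.mk_self]
      rw [map_sub] at h0
      exact (sub_eq_zero.mp h0).symm
    rw [← Polynomial.smul_eq_C_mul, ← AdjoinRoot.smul_mk, ← AdjoinRoot.smul_mk, hmk]

end Step

section Field
variable {k' : Type} [Field k'] [Fintype k'] [Algebra k' k]

/-- fixed points of `a ↦ a^q` in `k` lie in the image of `k'`, where `q = |k'|`. -/
lemma fixed_mem_range {q : ℕ} (hq : q = Fintype.card k') {a : k} (ha : a ^ q = a) :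
    a ∈ Set.range (algebraMap k' k) := by
  classical
  have hinj : Function.Injective (algebraMap k' k) := (algebraMap k' k).injective
  have hq2 : 2 ≤ q := hq ▸ Fintype.one_lt_card
  set P : Polynomial k := Polynomial.X ^ q - Polynomial.X with hP
  have hdeg : P.degree = (q : ℕ) := by
    rw [hP]
    rw [Polynomial.degree_sub_eq_left_of_degree_lt]
    · exact Polynomial.degree_X_pow q
    · rw [Polynomial.degree_X_pow, Polynomial.degree_X]
      exact_mod_cast by omega
  have hP0 : P ≠ 0 := by
    intro h
    rw [h, Polynomial.degree_zero] at hdeg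
    exact absurd hdeg (by simp)
  have hndeg : P.natDegree = q := Polynomial.natDegree_eq_of_degree_eq_some hdeg
  set S : Finset k := Finset.univ.image (algebraMap k' k) with hS
  have hcardS : S.card = q := by
    rw [hS, Finset.card_image_of_injective _ hinj, Finset.card_univ, hq]
  have hsub : S ⊆ P.roots.toFinset := by
    intro x hx
    rw [hS, Finset.mem_image] at hx
    obtain ⟨b, -, rfl⟩ := hx
    rw [Multiset.mem_toFinset, Polynomial.mem_roots hP0]
    have : (b : k') ^ q = b := by rw [hq]; exact FiniteField.pow_card b
    simp only [Polynomial.IsRoot, hP, Polynomial.eval_sub, Polynomial.eval_pow,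
      Polynomial.eval_X]
    rw [← map_pow, this, sub_self]
  have hcard : P.roots.toFinset.card ≤ q := by
    refine (Multiset.toFinset_card_le _).trans ?_
    exact (Polynomial.card_roots' P).trans (le_of_eq hndeg)
  have hSeq : S = P.roots.toFinset := Finset.eq_of_subset_of_card_le hsub (by omega)
  have haroot : a ∈ P.roots.toFinset := by
    rw [Multiset.mem_toFinset, Polynomial.mem_roots hP0]
    simp [Polynomial.IsRoot, hP, ha]
  rw [← hSeq, hS, Finset.mem_image] at haroot
  obtain ⟨b, -, hb⟩ := haroot
  exact ⟨b, hb⟩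

/-- The key coprimality lemma via Frobenius-stable ideals. -/
lemma coprime_of_stable {q n : ℕ} (hq : q = Fintype.card k') (hn : 0 < n)
    (fW : Polynomial k') (hmonic : fW.Monic) (hirr : Irreducible fW)
    (fr : k →+* k) (hfr : ∀ a : k, fr a = a ^ q)
    (hfrn : ∀ a : k, a ^ q ^ n = a)
    (g' : Polynomial k)
    (hrel : fW.map (algebraMap k' k) ∣ Polynomial.X * g'.map fr - g')
    (hX : IsCoprime (Polynomial.X : Polynomial k) (fW.map (algebraMap k' k)))
    (hg' : ¬ fW.map (algebraMap k' k) ∣ g') :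
    IsCoprime g' (fW.map (algebraMap k' k)) := by
  classical
  set fbar : Polynomial k := fW.map (algebraMap k' k) with hfbar
  have hinj : Function.Injective (algebraMap k' k) := (algebraMap k' k).injective
  have hfbar_monic : fbar.Monic := hmonic.map _
  have hfbar0 : fbar ≠ 0 := hfbar_monic.ne_zero
  set ψ : Polynomial k →+* Polynomial k := Polynomial.mapRingHom fr with hψ
  have hψapp : ∀ g : Polynomial k, ψ g = g.map fr := fun g => rfl
  have hfix : ∀ b : k', fr (algebraMap k' k b) = algebraMap k' k b := by
    intro b
    rw [hfr, ← map_pow]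
    congr 1
    rw [hq]; exact FiniteField.pow_card b
  have hψfbar : ψ fbar = fbar := by
    rw [hψapp, hfbar, Polynomial.map_map]
    congr 1
    exact RingHom.ext hfix
  have hψn : ∀ g : Polynomial k, (⇑ψ)^[n] g = g := by
    intro g
    have key : ∀ t : ℕ, ∀ g : Polynomial k, ∀ j : ℕ,
        ((⇑ψ)^[t] g).coeff j = (g.coeff j) ^ q ^ t := by
      intro t
      induction t with
      | zero => intro g j; simp
      | succ t ih =>
        intro g j
        rw [Function.iterate_succ_apply']
        rw [hψapp, Polynomial.coeff_map, ih g j, hfr, ← pow_mul, pow_succ]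
    ext j
    rw [key n g j, hfrn]
  set J : Ideal (Polynomial k) := Ideal.span {g', fbar} with hJ
  have hg'J : g' ∈ J := Ideal.subset_span (by simp)
  have hfbarJ : fbar ∈ J := Ideal.subset_span (by simp)
  have hXg'J : Polynomial.X * ψ g' ∈ J := by
    obtain ⟨t, ht⟩ := hrel
    have heq : Polynomial.X * ψ g' = g' + fbar * t := by rw [hψapp, ← ht]; ring
    rw [heq]
    exact J.add_mem hg'J (J.mul_mem_right t hfbarJ)
  have hψg'J : ψ g' ∈ J := by
    obtain ⟨s, t, hst⟩ := hX
    have heq : ψ g' = s * (Polynomial.X * ψ g') + t * (fbar * ψ g') := by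
      rw [← mul_assoc, ← mul_assoc, ← add_mul, hst, one_mul]
    rw [heq]
    exact J.add_mem (J.mul_mem_left s hXg'J) (J.mul_mem_left t (J.mul_mem_right _ hfbarJ))
  have hmapJ : Ideal.map ψ J ≤ J := by
    rw [hJ, Ideal.map_span]
    rw [Ideal.span_le]
    rintro x hx
    simp only [Set.image_insert_eq, Set.image_singleton, Set.mem_insert_iff,
      Set.mem_singleton_iff] at hx
    rcases hx with rfl | rfl
    · exact hψg'J
    · rw [hψfbar]; exact hfbarJ
  have hstep : ∀ x ∈ J, ψ x ∈ J := fun x hx => hmapJ (Ideal.mem_map_of_mem ψ hx)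
  have hiterJ : ∀ t : ℕ, ∀ x ∈ J, (⇑ψ)^[t] x ∈ J := by
    intro t
    induction t with
    | zero => intro x hx; simpa using hx
    | succ t ih =>
      intro x hx
      rw [Function.iterate_succ_apply]
      exact ih _ (hstep x hx)
  have hψsurj : Function.Surjective ⇑ψ := by
    intro x
    refine ⟨(⇑ψ)^[n - 1] x, ?_⟩
    have heq : ψ ((⇑ψ)^[n-1] x) = (⇑ψ)^[n] x := by
      rw [← Function.iterate_succ_apply' ψ (n-1) x]
      congr 1
      omega
    rw [heq, hψn]
  have hJmap : J = Ideal.map ψ J := by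
    refine le_antisymm ?_ hmapJ
    intro x hx
    rw [Ideal.mem_map_iff_of_surjective ψ hψsurj]
    refine ⟨(⇑ψ)^[n-1] x, hiterJ _ x hx, ?_⟩
    have heq : ψ ((⇑ψ)^[n-1] x) = (⇑ψ)^[n] x := by
      rw [← Function.iterate_succ_apply' ψ (n-1) x]
      congr 1
      omega
    rw [heq, hψn]
  have hprin : J.IsPrincipal := inferInstance
  obtain ⟨h, hh⟩ := hprin
  have hh0 : h ≠ 0 := by
    rintro rfl
    rw [hh] at hfbarJ
    rw [Ideal.submodule_span_eq, Ideal.mem_span_singleton] at hfbarJ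
    exact hfbar0 (zero_dvd_iff.mp hfbarJ)
  have hh' : J = Ideal.span {h} := hh
  set h₁ : Polynomial k := normalize h with hh₁
  have hmono : h₁.Monic := Polynomial.monic_normalize hh0
  have hspan1 : J = Ideal.span {h₁} :=
    hh'.trans (Ideal.span_singleton_eq_span_singleton.mpr ((normalize_associated h).symm))
  have hassoc : Associated (ψ h₁) h₁ := by
    have heq : Ideal.map ψ (Ideal.span {h₁}) = Ideal.span {h₁} := by
      rw [← hspan1, ← hJmap]
    rw [Ideal.map_span, Set.image_singleton] at heq
    exact Ideal.span_singleton_eq_span_singleton.mp heq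
  have hψh₁monic : (ψ h₁).Monic := hmono.map fr
  have hψh₁ : ψ h₁ = h₁ := Polynomial.eq_of_monic_of_associated hψh₁monic hmono hassoc
  have hcoeffs : ∀ j : ℕ, h₁.coeff j ∈ Set.range (algebraMap k' k) := by
    intro j
    have hfixc : fr (h₁.coeff j) = h₁.coeff j := by
      conv_rhs => rw [← hψh₁]
      rw [hψapp, Polynomial.coeff_map]
    exact fixed_mem_range hq (by rw [← hfr, hfixc])
  obtain ⟨h₀, hh₀⟩ := (Polynomial.mem_lifts h₁).mp
    ((Polynomial.lifts_iff_coeff_lifts h₁).mpr hcoeffs)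
  have hdeg₀ : h₀.natDegree = h₁.natDegree := by rw [← hh₀, Polynomial.natDegree_map]
  have hmono₀ : h₀.Monic := by
    have hc : algebraMap k' k (h₀.coeff h₀.natDegree) = 1 := by
      rw [← Polynomial.coeff_map, hh₀, hdeg₀, hmono.coeff_natDegree]
    have hone : h₀.coeff h₀.natDegree = 1 := hinj (by rw [hc, map_one])
    rwa [Polynomial.Monic, Polynomial.leadingCoeff]
  have hdvd1 : h₁ ∣ fbar := Ideal.mem_span_singleton.mp (hspan1 ▸ hfbarJ)
  have hdvd₀ : h₀ ∣ fW := by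
    rw [← Polynomial.map_dvd_map (algebraMap k' k) hinj hmono₀, hh₀]
    exact hdvd1
  obtain ⟨t, ht⟩ := hdvd₀
  rcases hirr.isUnit_or_isUnit ht with hu | hu
  · have hu1 : IsUnit h₁ := by
      rw [← hh₀, ← Polynomial.coe_mapRingHom]
      exact hu.map (Polynomial.mapRingHom (algebraMap k' k))
    have hJtop : J = ⊤ := by rw [hspan1, Ideal.span_singleton_eq_top.mpr hu1]
    have h1J : (1 : Polynomial k) ∈ J := by rw [hJtop]; trivial
    rw [hJ] at h1J
    obtain ⟨a, b, hab⟩ := Ideal.mem_span_pair.mp h1J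
    exact ⟨a, b, hab⟩
  · exfalso
    apply hg'
    have hassoc₀ : Associated h₀ fW := ⟨hu.unit, by rw [IsUnit.unit_spec]; exact ht.symm⟩
    have hassoc₁ : Associated h₁ fbar := by
      have := hassoc₀.map (Polynomial.mapRingHom (algebraMap k' k))
      rwa [Polynomial.coe_mapRingHom, hh₀] at this
    have hg'J' : h₁ ∣ g' := Ideal.mem_span_singleton.mp (hspan1 ▸ hg'J)
    exact hassoc₁.symm.dvd.trans hg'J'

end Field
end LF

open LF in
/-- **Lemma 2.4.** If `f_W` is irreducible over `k'`, then `F` is reducible for `W`. -/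
theorem reducible_of_irreducible_charpoly
    {k' k : Type} [Field k'] [Fintype k'] [Field k] [Algebra k' k]
    (q n m : ℕ) (hq : q = Fintype.card k') (hn : 0 < n)
    (α : Module.Basis (Fin n) k' k)
    (fW : Polynomial k') (hmonic : fW.Monic) (hdvd : fW ∣ Polynomial.X ^ n - 1)
    (n' : ℕ) (hn' : n' = fW.natDegree) (hn'pos : 0 < n')
    (gW : Polynomial k') (hgW : gW = Polynomial.X ^ n' - fW)
    (H : Finset (Fin m → Polynomial k))
    (hHdeg : ∀ h ∈ H, ∀ i, (h i).natDegree < n')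
    (Fbar Gbar : Set (MvPolynomial (Fin m × Fin n') k))
    (hFbar : Fbar = (fun h => ellSum m n' h) '' ↑H)
    (hGbar : Gbar = Fbar ∪ QbarFrom m n' q 0 (gW.map (algebraMap k' k)))
    (hirr : Irreducible fW) :
    ReducibleFor q m n' fW Gbar := by
  classical
  intro i hi
  by_cases heq : Vspace Gbar q ⊓ S1r m n' (i : ℕ) = Vspace Gbar q ⊓ S1r m n' ((i : ℕ) + 1)
  · exact Or.inl heq
  right
  -- characteristic and Frobenius setup
  have hq2 : 2 ≤ q := by rw [hq]; exact Fintype.one_lt_card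
  set pc := ringChar k' with hpc
  haveI : CharP k' pc := ringChar.charP k'
  obtain ⟨e, hpprime, hcard⟩ := FiniteField.card k' pc
  haveI := Fact.mk hpprime
  have hinj : Function.Injective (algebraMap k' k) := (algebraMap k' k).injective
  haveI : CharP k pc := charP_of_injective_algebraMap hinj pc
  haveI : ExpChar k pc := ExpChar.prime hpprime
  haveI : CharP (MvPolynomial (Fin m × Fin n') k) pc :=
    charP_of_injective_ringHom (MvPolynomial.C_injective (Fin m × Fin n') k) pc
  haveI : ExpChar (MvPolynomial (Fin m × Fin n') k) pc := ExpChar.prime hpprime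
  have hqpe : q = pc ^ (e : ℕ) := by rw [hq, hcard]
  set fr : k →+* k := iterateFrobenius k pc (e : ℕ) with hfrdef
  have hfr : ∀ a : k, fr a = a ^ q := fun a => by
    rw [hfrdef, iterateFrobenius_def, ← hqpe]
  set frM := iterateFrobenius (MvPolynomial (Fin m × Fin n') k) pc (e : ℕ) with hfrMdef
  have hfrM : ∀ x : MvPolynomial (Fin m × Fin n') k, frM x = x ^ q := fun x => by
    rw [hfrMdef, iterateFrobenius_def, ← hqpe]
  set frt : ℕ → (k →+* k) := fun t => iterateFrobenius k pc ((e : ℕ) * t) with hfrtdef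
  have hfrt : ∀ (t : ℕ) (a : k), frt t a = a ^ q ^ t := by
    intro t a
    rw [hfrtdef]
    show iterateFrobenius k pc ((e : ℕ) * t) a = _
    rw [iterateFrobenius_def, pow_mul, ← hqpe]
  letI : Fintype k := Module.fintypeOfFintype α
  have hcardk : Fintype.card k = q ^ n := by
    rw [Module.card_fintype α, ← hq, Fintype.card_fin]
  have hfrn : ∀ a : k, a ^ q ^ n = a := fun a => by
    rw [← hcardk]; exact FiniteField.pow_card a
  -- fbar / gbar facts
  set fbar : Polynomial k := fW.map (algebraMap k' k) with hfbardef
  set gbar : Polynomial k := gW.map (algebraMap k' k) with hgbardef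
  have hfbmonic : fbar.Monic := hmonic.map _
  have hfbdeg : fbar.natDegree = n' := by
    rw [hfbardef, hmonic.natDegree_map, hn']
  have hfb0 : fbar ≠ 0 := hfbmonic.ne_zero
  have hdegfW : fW.degree = (n' : ℕ) := by
    rw [hn', Polynomial.degree_eq_natDegree hmonic.ne_zero]
  have hgWdeg : gW.natDegree < n' := by
    rcases eq_or_ne gW 0 with h | h
    · rw [h]; simpa using hn'pos
    · rw [Polynomial.natDegree_lt_iff_degree_lt h, hgW]
      have h1 : (Polynomial.X ^ n' : Polynomial k').degree = fW.degree := by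
        rw [Polynomial.degree_X_pow, hdegfW]
      have h2 := Polynomial.degree_sub_lt h1 (pow_ne_zero _ Polynomial.X_ne_zero)
        (by rw [Polynomial.leadingCoeff_X_pow]; exact hmonic.symm)
      rwa [Polynomial.degree_X_pow] at h2
  have hgdeg : gbar.natDegree < n' := by
    have := Polynomial.natDegree_map_le (f := algebraMap k' k) (p := gW)
    rw [← hgbardef] at this
    omega
  have hfb : fbar = Polynomial.X ^ n' - gbar := by
    rw [hgbardef, hgW, Polynomial.map_sub, Polynomial.map_pow, Polynomial.map_X]
    ring
  have hQsub : QbarFrom m n' q 0 gbar ⊆ Gbar := by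
    rw [hGbar, hgbardef]; exact Set.subset_union_right
  have hfbar_dvd : fbar ∣ (Polynomial.X ^ n - 1 : Polynomial k) := by
    obtain ⟨t, ht⟩ := hdvd
    refine ⟨t.map (algebraMap k' k), ?_⟩
    rw [hfbardef, ← Polynomial.map_mul, ← ht, Polynomial.map_sub, Polynomial.map_pow,
      Polynomial.map_X, Polynomial.map_one]
  have hXcop : IsCoprime (Polynomial.X : Polynomial k) fbar := by
    refine IsCoprime.of_isCoprime_of_dvd_right ?_ hfbar_dvd
    refine ⟨Polynomial.X ^ (n - 1), -1, ?_⟩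
    have hx : Polynomial.X ^ (n - 1) * Polynomial.X = (Polynomial.X : Polynomial k) ^ n := by
      rw [← pow_succ]; congr 1; omega
    rw [hx]; ring
  have hcomp0 : fr.comp (algebraMap k' k) = algebraMap k' k := by
    refine RingHom.ext fun b => ?_
    rw [RingHom.comp_apply, hfr, ← map_pow]
    congr 1
    rw [hq]; exact FiniteField.pow_card b
  have hfrfbar : fbar.map fr = fbar := by
    rw [hfbardef, Polynomial.map_map, hcomp0]
  have mkcong : ∀ a b : Polynomial k, (AdjoinRoot.mk fbar) a = (AdjoinRoot.mk fbar) b →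
      (AdjoinRoot.mk fbar) (Polynomial.X * a.map fr) =
        (AdjoinRoot.mk fbar) (Polynomial.X * b.map fr) := by
    intro a b hab
    rw [AdjoinRoot.mk_eq_mk] at hab ⊢
    obtain ⟨t, ht⟩ := hab
    refine ⟨Polynomial.X * t.map fr, ?_⟩
    rw [← mul_sub, ← Polynomial.map_sub, ht, Polynomial.map_mul, hfrfbar]
    ring
  -- extract a witness of the strict inclusion
  have hle : Vspace Gbar q ⊓ S1r m n' ((i : ℕ) + 1) ≤ Vspace Gbar q ⊓ S1r m n' (i : ℕ) :=
    inf_le_inf_left _ S1r_antitone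
  obtain ⟨v₀, hv₀P, hv₀not⟩ := SetLike.exists_of_lt (lt_of_le_of_ne hle (Ne.symm heq))
  set g₀ : Polynomial k := compPoly m n' i v₀ with hg₀def
  have hv₀V : v₀ ∈ Vspace Gbar q := hv₀P.1
  have hv₀S : v₀ ∈ S1r m n' (i : ℕ) := hv₀P.2
  have hg₀ : ¬ fbar ∣ g₀ := by
    intro hdvd'
    have hdeg' : g₀.natDegree < n' := natDegree_finSum_lt hn'pos _
    have hzero' : g₀ = 0 := by
      rcases eq_or_ne g₀ 0 with h | h
      · exact h
      · refine Polynomial.eq_zero_of_dvd_of_degree_lt hdvd' ?_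
        rw [Polynomial.degree_eq_natDegree h, Polynomial.degree_eq_natDegree hfb0, hfbdeg]
        exact_mod_cast hdeg'
    obtain ⟨hz, hrep⟩ := mem_S1r_elim hv₀S
    have hcoef : ∀ jj : Fin n', cOf v₀ (i, jj) = 0 := by
      intro jj
      have := (finSum_eq_zero_iff (fun jj : Fin n' => cOf v₀ (i, jj))).mp hzero'
      exact this jj
    have hmem : v₀ ∈ S1r m n' ((i : ℕ) + 1) := by
      rw [hrep]
      refine sum_mem_S1r _ ?_
      intro p hp
      have hcase : (p.1 : ℕ) < (i : ℕ) ∨ (p.1 : ℕ) = (i : ℕ) := by omega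
      rcases hcase with h | h
      · exact hz p h
      · have hp1 : p.1 = i := Fin.ext h
        rcases p with ⟨p1, p2⟩
        simp only at hp1
        subst hp1
        exact hcoef p2
    exact hv₀not ⟨hv₀V, hmem⟩
  -- Frobenius iterates
  have hfrt0 : g₀.map (frt 0) = g₀ := by
    have : frt 0 = RingHom.id k := by
      refine RingHom.ext fun a => ?_
      rw [hfrt, pow_zero, pow_one, RingHom.id_apply]
    rw [this, Polynomial.map_id]
  have hfrtsucc : ∀ t : ℕ, (g₀.map (frt t)).map fr = g₀.map (frt (t + 1)) := by
    intro t
    rw [Polynomial.map_map]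
    congr 1
    refine RingHom.ext fun a => ?_
    rw [RingHom.comp_apply, hfrt, hfr, hfrt, ← pow_mul, ← pow_succ]
  have hshift : ∀ t : ℕ,
      (AdjoinRoot.mk fbar) (Polynomial.X * (Polynomial.X ^ t * g₀.map (frt t)).map fr) =
        (AdjoinRoot.mk fbar) (Polynomial.X ^ (t + 1) * g₀.map (frt (t + 1))) := by
    intro t
    congr 1
    rw [Polynomial.map_mul, Polynomial.map_pow, Polynomial.map_X, hfrtsucc, ← mul_assoc,
      ← pow_succ']
  have hIter : ∀ t : ℕ, ∃ w ∈ Vspace Gbar q ⊓ S1r m n' (i : ℕ),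
      (AdjoinRoot.mk fbar) (compPoly m n' i w) =
        (AdjoinRoot.mk fbar) (Polynomial.X ^ t * g₀.map (frt t)) := by
    intro t
    induction t with
    | zero =>
      refine ⟨v₀, hv₀P, ?_⟩
      rw [pow_zero, one_mul, hfrt0, hg₀def]
    | succ t ih =>
      obtain ⟨w, hwP, hwmk⟩ := ih
      obtain ⟨w', hw'P, hw'mk⟩ :=
        step q gbar hq2 hgdeg hQsub frM hfrM fr hfr fbar hfb hwP
      refine ⟨w', hw'P, ?_⟩
      rw [hw'mk i, mkcong _ _ hwmk, hshift t]
  choose W hWP hWmk using hIter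
  set A : ℕ → AdjoinRoot fbar :=
    fun t => (AdjoinRoot.mk fbar) (Polynomial.X ^ t * g₀.map (frt t)) with hAdef
  have hA0 : A 0 = (AdjoinRoot.mk fbar) g₀ := by
    show (AdjoinRoot.mk fbar) (Polynomial.X ^ 0 * g₀.map (frt 0)) = _
    rw [pow_zero, one_mul, hfrt0]
  have hA0ne : A 0 ≠ 0 := by
    rw [hA0]
    intro h
    exact hg₀ (AdjoinRoot.mk_eq_zero.mp h)
  have hAn : A n = A 0 := by
    rw [hA0]
    show (AdjoinRoot.mk fbar) (Polynomial.X ^ n * g₀.map (frt n)) = _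
    rw [AdjoinRoot.mk_eq_mk]
    have hmapn : g₀.map (frt n) = g₀ := by
      ext j
      rw [Polynomial.coeff_map, hfrt, hfrn]
    rw [hmapn]
    obtain ⟨t, ht⟩ := hfbar_dvd
    exact ⟨t * g₀, by rw [← mul_assoc, ← ht]; ring⟩
  -- choice of the scalar
  have hchoice : ∃ cc : k, ∑ t ∈ Finset.range n, cc ^ q ^ t • A t ≠ 0 := by
    by_contra hcon
    push_neg at hcon
    set rt : ℕ → Polynomial k := fun t => (Polynomial.X ^ t * g₀.map (frt t)) %ₘ fbar
      with hrtdef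
    have hrtmk : ∀ t, (AdjoinRoot.mk fbar) (rt t) = A t := by
      intro t
      rw [hrtdef, hAdef]
      show (AdjoinRoot.mk fbar) ((Polynomial.X ^ t * g₀.map (frt t)) %ₘ fbar) = _
      rw [AdjoinRoot.mk_eq_mk]
      refine ⟨-((Polynomial.X ^ t * g₀.map (frt t)) /ₘ fbar), ?_⟩
      rw [Polynomial.modByMonic_eq_sub_mul_div _ fbar]
      ring
    have hrtdeg : ∀ t, (rt t).degree < fbar.degree :=
      fun t => Polynomial.degree_modByMonic_lt _ hfbmonic
    have hSzero : ∀ cc : k, ∑ t ∈ Finset.range n, cc ^ q ^ t • rt t = 0 := by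
      intro cc
      have h1 : (AdjoinRoot.mk fbar) (∑ t ∈ Finset.range n, cc ^ q ^ t • rt t) = 0 := by
        rw [map_sum]
        have : ∀ t ∈ Finset.range n,
            (AdjoinRoot.mk fbar) (cc ^ q ^ t • rt t) = cc ^ q ^ t • A t := by
          intro t _
          rw [← AdjoinRoot.smul_mk, hrtmk]
        rw [Finset.sum_congr rfl this]
        exact hcon cc
      have h2 := AdjoinRoot.mk_eq_zero.mp h1
      rcases eq_or_ne (∑ t ∈ Finset.range n, cc ^ q ^ t • rt t) 0 with h | h
      · exact h
      · refine Polynomial.eq_zero_of_dvd_of_degree_lt h2 ?_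
        refine lt_of_le_of_lt (Polynomial.degree_sum_le _ _) ?_
        have hbot : (⊥ : WithBot ℕ) < fbar.degree := by
          rw [Polynomial.degree_eq_natDegree hfb0]
          exact WithBot.bot_lt_coe _
        rw [Finset.sup_lt_iff hbot]
        intro t _
        exact lt_of_le_of_lt (Polynomial.degree_smul_le _ _) (hrtdeg t)
    have hrt0ne : rt 0 ≠ 0 := by
      intro h
      apply hA0ne
      rw [← hrtmk 0, h, map_zero]
    obtain ⟨jj, hjj⟩ : ∃ jj, (rt 0).coeff jj ≠ 0 := by
      by_contra hc
      push_neg at hc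
      exact hrt0ne (Polynomial.ext fun j => by rw [hc j, Polynomial.coeff_zero])
    have hPP0 : (∑ t ∈ Finset.range n,
        Polynomial.C ((rt t).coeff jj) * Polynomial.X ^ q ^ t) = 0 := by
      refine Polynomial.eq_zero_of_natDegree_lt_card_of_eval_eq_zero _
        (f := (id : k → k)) Function.injective_id ?_ ?_
      · intro cc
        have h := congrArg (fun P : Polynomial k => P.coeff jj) (hSzero cc)
        simp only [Polynomial.finset_sum_coeff, Polynomial.coeff_smul, smul_eq_mul,
          Polynomial.coeff_zero] at h
        rw [Polynomial.eval_finset_sum]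
        simp only [Polynomial.eval_mul, Polynomial.eval_C, Polynomial.eval_pow,
          Polynomial.eval_X, id]
        rw [Finset.sum_congr rfl fun t _ => mul_comm ((rt t).coeff jj) (cc ^ q ^ t)]
        exact h
      · have h1 : (∑ t ∈ Finset.range n,
            Polynomial.C ((rt t).coeff jj) * Polynomial.X ^ q ^ t).natDegree ≤ q ^ (n-1) := by
          refine Polynomial.natDegree_sum_le_of_forall_le _ _ fun t ht => ?_
          refine (Polynomial.natDegree_C_mul_le _ _).trans ?_
          rw [Polynomial.natDegree_X_pow]
          refine Nat.pow_le_pow_right (by omega) ?_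
          simp only [Finset.mem_range] at ht
          omega
        have h2 : q ^ (n-1) < q ^ n := Nat.pow_lt_pow_right (by omega) (by omega)
        rw [hcardk]
        omega
    have hco := congrArg (fun P : Polynomial k => P.coeff 1) hPP0
    simp only [Polynomial.finset_sum_coeff, Polynomial.coeff_C_mul, Polynomial.coeff_X_pow,
      Polynomial.coeff_zero] at hco
    rw [Finset.sum_eq_single 0] at hco
    · rw [pow_zero, if_pos rfl, mul_one] at hco
      exact hjj hco
    · intro t ht ht0
      rw [if_neg, mul_zero]
      have : 1 < q ^ t := Nat.one_lt_pow ht0 (by omega)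
      omega
    · intro habs
      exact absurd (Finset.mem_range.mpr hn) habs
  obtain ⟨cc, hcc⟩ := hchoice
  set u : MvPolynomial (Fin m × Fin n') k := ∑ t ∈ Finset.range n, cc ^ q ^ t • W t with hudef
  have huP : u ∈ Vspace Gbar q ⊓ S1r m n' (i : ℕ) :=
    Submodule.sum_mem _ fun t _ => Submodule.smul_mem _ _ (hWP t)
  set g' : Polynomial k := compPoly m n' i u with hg'def
  have hg'sum : g' = ∑ t ∈ Finset.range n, cc ^ q ^ t • compPoly m n' i (W t) := by
    rw [hg'def, hudef, compPoly_sum]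
    exact Finset.sum_congr rfl fun t _ => compPoly_smul _ _ _
  have hmkg' : (AdjoinRoot.mk fbar) g' = ∑ t ∈ Finset.range n, cc ^ q ^ t • A t := by
    rw [hg'sum, map_sum]
    refine Finset.sum_congr rfl fun t _ => ?_
    rw [← AdjoinRoot.smul_mk, hWmk t]
  have hg'ne : ¬ fbar ∣ g' := by
    intro h
    apply hcc
    rw [← hmkg']
    exact AdjoinRoot.mk_eq_zero.mpr h
  have hmaps : ∀ (c : k) (g : Polynomial k), (c • g).map fr = (c ^ q) • g.map fr := by
    intro c g
    rw [Polynomial.smul_eq_C_mul, Polynomial.map_mul, Polynomial.map_C, hfr,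
      Polynomial.smul_eq_C_mul]
  have hrel : fbar ∣ Polynomial.X * g'.map fr - g' := by
    rw [← AdjoinRoot.mk_eq_mk]
    have hmapsum : g'.map fr =
        ∑ t ∈ Finset.range n, (cc ^ q ^ t) ^ q • (compPoly m n' i (W t)).map fr := by
      rw [hg'sum, ← Polynomial.coe_mapRingHom, map_sum]
      refine Finset.sum_congr rfl fun t _ => ?_
      rw [Polynomial.coe_mapRingHom, hmaps]
    have step1 : Polynomial.X * g'.map fr =
        ∑ t ∈ Finset.range n,
          cc ^ q ^ (t + 1) • (Polynomial.X * (compPoly m n' i (W t)).map fr) := by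
      rw [hmapsum, Finset.mul_sum]
      refine Finset.sum_congr rfl fun t _ => ?_
      rw [mul_smul_comm, ← pow_mul, ← pow_succ]
    rw [step1, map_sum]
    have step2 : ∀ t ∈ Finset.range n,
        (AdjoinRoot.mk fbar)
            (cc ^ q ^ (t + 1) • (Polynomial.X * (compPoly m n' i (W t)).map fr)) =
          cc ^ q ^ (t + 1) • A (t + 1) := by
      intro t _
      rw [← AdjoinRoot.smul_mk]
      congr 1
      rw [mkcong _ _ (hWmk t), hshift t]
    rw [Finset.sum_congr rfl step2, hmkg']
    have hFn : cc ^ q ^ n • A n = cc ^ q ^ 0 • A 0 := by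
      rw [hAn, hfrn, pow_zero, pow_one]
    have hsum := Finset.sum_range_succ' (fun t => cc ^ q ^ t • A t) n
    rw [Finset.sum_range_succ (fun t => cc ^ q ^ t • A t) n] at hsum
    have : ∑ t ∈ Finset.range n, cc ^ q ^ (t + 1) • A (t + 1) =
        ∑ t ∈ Finset.range n, cc ^ q ^ t • A t := by
      have := hsum
      rw [hFn] at this
      -- this : ∑_{range n} F t + F 0 = ∑_{range n} F (t+1) + F 0
      exact (add_right_cancel this.symm)
    rw [this]
  have hcop : IsCoprime g' fbar := by
    rw [hfbardef]
    refine coprime_of_stable hq hn fW hmonic hirr fr hfr hfrn g' ?_ ?_ ?_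
    · rw [← hfbardef]; exact hrel
    · rw [← hfbardef]; exact hXcop
    · rw [← hfbardef]; exact hg'ne
  obtain ⟨hz, hrepu⟩ := mem_S1r_elim huP.2
  refine ⟨fun j => compPoly m n' j u, fun j => natDegree_finSum_lt hn'pos _, ?_, ?_, ?_⟩
  · intro j hj
    refine (finSum_eq_zero_iff _).mpr fun jj => hz (j, jj) hj
  · rw [ellSum_compPoly hrepu]
    exact huP
  · exact hcop

end
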